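/- (Laplace mechanism is (ε,0)-differentially private.) Let ε > 0, k ≥ 1, Δf > 0, and let f assign to each database a vector in ℝ^k. Suppose D₁, D₂ are two databases with ‖f(D₁) − f(D₂)‖₁ ≤ Δf. Let Z = (Z₁, …, Z_k) be independent random variables each with Laplace distribution of scale λ = Δf/ε and mean 0. Then for every measurable set S ⊆ ℝ^k, P[f(D₁) + Z ∈ S] ≤ e^ε · P[f(D₂) + Z ∈ S]. -/

import Mathlib

open MeasureTheory
open scoped BigOperators ENNReal

/-- The Laplace distribution with scale `lam` and mean `0`, given by its density
`x ↦ (1/(2λ)) · exp (−|x|/λ)` with respect to Lebesgue measure. -/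
noncomputable def laplaceMeasure (lam : ℝ) : Measure ℝ :=
  volume.withDensity (fun x => ENNReal.ofReal ((1 / (2 * lam)) * Real.exp (-|x| / lam)))

/-- Product of lintegrals over a finite product of Lebesgue measures. -/
lemma lintegral_fin_prod : ∀ {n : ℕ} (f : Fin n → ℝ → ℝ≥0∞), (∀ i, Measurable (f i)) →
    ∫⁻ x : Fin n → ℝ, ∏ i, f i (x i) ∂(Measure.pi fun _ => (volume : Measure ℝ))
      = ∏ i, ∫⁻ x, f i x := by
  intro n
  induction n with
  | zero => intro f hf; simp
  | succ n ih =>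
    intro f hf
    have h := (measurePreserving_piFinSuccAbove (fun _ : Fin (n+1) => (volume : Measure ℝ)) 0).symm
    rw [← h.lintegral_comp_emb (MeasurableEquiv.measurableEmbedding _)]
    simp_rw [MeasurableEquiv.piFinSuccAbove_symm_apply, Fin.insertNthEquiv, Equiv.coe_fn_mk,
      Fin.insertNth_zero, Fin.prod_univ_succ, Fin.cons_zero, Fin.cons_succ]
    simp only [Fin.zero_succAbove, cast_eq]
    rw [lintegral_prod_mul (f := f 0) (g := fun y : Fin n → ℝ => ∏ i, f i.succ (y i))
      (hf 0).aemeasurable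
      ((Finset.measurable_prod Finset.univ fun i _ =>
        (hf i.succ).comp (measurable_pi_apply i)).aemeasurable)]
    rw [ih (fun i => f i.succ) (fun i => hf i.succ)]

lemma pi_withDensity_fin {n : ℕ} (g : Fin n → ℝ → ℝ≥0∞) (hg : ∀ i, Measurable (g i))
    [∀ i, SigmaFinite ((volume : Measure ℝ).withDensity (g i))] :
    Measure.pi (fun i => (volume : Measure ℝ).withDensity (g i))
      = (Measure.pi fun _ : Fin n => (volume : Measure ℝ)).withDensity
          (fun x => ∏ i, g i (x i)) := by
  apply Measure.pi_eq
  intro s hs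
  rw [withDensity_apply _ (MeasurableSet.univ_pi hs)]
  rw [← lintegral_indicator (MeasurableSet.univ_pi hs) _]
  have : (Set.univ.pi s).indicator (fun x : Fin n → ℝ => ∏ i, g i (x i))
      = fun x => ∏ i, (s i).indicator (g i) (x i) := by
    funext x
    by_cases hx : x ∈ Set.univ.pi s
    · rw [Set.indicator_of_mem hx]
      exact Finset.prod_congr rfl fun i _ =>
        (Set.indicator_of_mem (hx i (Set.mem_univ i)) _).symm
    · rw [Set.indicator_of_notMem hx]
      rw [Set.mem_univ_pi] at hx
      push_neg at hx
      obtain ⟨i, hi⟩ := hx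
      exact (Finset.prod_eq_zero (Finset.mem_univ i)
        (by rw [Set.indicator_of_notMem hi])).symm
  rw [this, lintegral_fin_prod _ (fun i => (hg i).indicator (hs i))]
  exact Finset.prod_congr rfl fun i _ => by
    rw [lintegral_indicator (hs i) _, withDensity_apply _ (hs i)]


/-- The Laplace mechanism is `(ε, 0)`-differentially private: adding independent
Laplace noise of scale `λ = Δf/ε` to each coordinate of a query `f : DB → ℝ^k` whose
`ℓ¹`-sensitivity on the pair `(D₁, D₂)` is at most `Δf` yields output distributions
whose measures differ multiplicatively by at most `e^ε` on every measurable set. -/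
theorem laplace_mechanism_diff_private {DB : Type*}
    (ε Δf : ℝ) (hε : 0 < ε) (hΔf : 0 < Δf)
    (k : ℕ) (hk : 1 ≤ k) (f : DB → (Fin k → ℝ)) (D₁ D₂ : DB)
    (hsens : ∑ i, |f D₁ i - f D₂ i| ≤ Δf)
    (S : Set (Fin k → ℝ)) (hS : MeasurableSet S) :
    Measure.map (fun z => f D₁ + z) (Measure.pi fun _ : Fin k => laplaceMeasure (Δf / ε)) S ≤
      ENNReal.ofReal (Real.exp ε) *
        Measure.map (fun z => f D₂ + z) (Measure.pi fun _ : Fin k => laplaceMeasure (Δf / ε)) S := by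
  set lam : ℝ := Δf / ε with hlam_def
  have hlam : 0 < lam := div_pos hΔf hε
  set g : ℝ → ℝ≥0∞ := fun x => ENNReal.ofReal ((1 / (2 * lam)) * Real.exp (-|x| / lam))
    with hg_def
  have hgm : Measurable g := by
    apply Measurable.ennreal_ofReal
    exact measurable_const.mul ((measurable_abs.neg.div_const lam).exp)
  -- the key pointwise density-ratio bound
  have hkey : ∀ a b u : ℝ,
      g (u - a) ≤ ENNReal.ofReal (Real.exp (|a - b| / lam)) * g (u - b) := by
    intro a b u
    rw [hg_def]
    dsimp only
    rw [← ENNReal.ofReal_mul (Real.exp_nonneg _)]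
    apply ENNReal.ofReal_le_ofReal
    have habs : |u - b| - |u - a| ≤ |a - b| := by
      have h := abs_sub_abs_le_abs_sub (u - b) (u - a)
      have : u - b - (u - a) = a - b := by ring
      rwa [this] at h
    have h1 : -|u - a| / lam ≤ |a - b| / lam + -|u - b| / lam := by
      rw [← add_div]
      gcongr
      linarith
    calc 1 / (2 * lam) * Real.exp (-|u - a| / lam)
        ≤ 1 / (2 * lam) * Real.exp (|a - b| / lam + -|u - b| / lam) := by
          gcongr
      _ = Real.exp (|a - b| / lam) * (1 / (2 * lam) * Real.exp (-|u - b| / lam)) := by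
          rw [Real.exp_add]; ring
  haveI : SigmaFinite ((volume : Measure ℝ).withDensity g) := by
    rw [hg_def]; infer_instance
  have hpi : (Measure.pi fun _ : Fin k => laplaceMeasure lam)
      = (Measure.pi fun _ : Fin k => (volume : Measure ℝ)).withDensity
          (fun x => ∏ i, g (x i)) :=
    pi_withDensity_fin (fun _ => g) (fun _ => hgm)
  have hmap : ∀ a : Fin k → ℝ,
      Measure.map (fun z => a + z) (Measure.pi fun _ : Fin k => laplaceMeasure lam) S
        = ∫⁻ y in S, ∏ i, g (y i - a i)
            ∂(Measure.pi fun _ : Fin k => (volume : Measure ℝ)) := by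
    intro a
    rw [hpi, Measure.map_apply (measurable_const_add a) hS,
      withDensity_apply _ (measurable_const_add a hS),
      ← lintegral_indicator (measurable_const_add a hS) _]
    have : ((fun z => a + z) ⁻¹' S).indicator (fun x : Fin k → ℝ => ∏ i, g (x i))
        = fun x => S.indicator (fun y => ∏ i, g (y i - a i)) (a + x) := by
      funext x
      by_cases hx : a + x ∈ S
      · rw [Set.indicator_of_mem hx, Set.indicator_of_mem (Set.mem_preimage.2 hx)]
        exact Finset.prod_congr rfl fun i _ => by simp
      · have hx' : x ∉ (fun z => a + z) ⁻¹' S := hx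
        rw [Set.indicator_of_notMem hx', Set.indicator_of_notMem hx]
    rw [this, lintegral_add_left_eq_self _ a, lintegral_indicator hS _]
  rw [hmap (f D₁), hmap (f D₂)]
  have hmeas2 : Measurable fun y : Fin k → ℝ => ∏ i, g (y i - f D₂ i) :=
    Finset.measurable_prod Finset.univ fun i _ =>
      hgm.comp ((measurable_pi_apply i).sub measurable_const)
  rw [← lintegral_const_mul _ hmeas2]
  apply lintegral_mono
  intro y
  calc ∏ i, g (y i - f D₁ i)
      ≤ ∏ i, (ENNReal.ofReal (Real.exp (|f D₁ i - f D₂ i| / lam)) * g (y i - f D₂ i)) :=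
        Finset.prod_le_prod' fun i _ => hkey _ _ _
    _ = (∏ i, ENNReal.ofReal (Real.exp (|f D₁ i - f D₂ i| / lam)))
          * ∏ i, g (y i - f D₂ i) := Finset.prod_mul_distrib
    _ ≤ ENNReal.ofReal (Real.exp ε) * ∏ i, g (y i - f D₂ i) := by
        gcongr
        rw [← ENNReal.ofReal_prod_of_nonneg (fun i _ => Real.exp_nonneg _),
          ← Real.exp_sum]
        apply ENNReal.ofReal_le_ofReal
        apply Real.exp_le_exp.2
        have hde : Δf / lam = ε := by
          rw [hlam_def]; field_simp
        rw [← Finset.sum_div, ← hde]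
        gcongr
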